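/- Let Ω ⊆ ℝⁿ be an open bounded set and let u : closure(Ω) → ℝ be a continuous function with u = 0 on ∂Ω, which is locally semiconcave in Ω and satisfies |∇u(x)| = 1 at almost every point x ∈ Ω (note that u, being locally semiconcave, is locally Lipschitz and hence differentiable almost everywhere in Ω). Then u(x) = dist(x, ∂Ω) for every x ∈ Ω. -/

import Mathlib

open Set Metric MeasureTheory Filter
open scoped RealInnerProductSpace Topology NNReal

variable {n : ℕ}

local notation "E" => EuclideanSpace ℝ (Fin n)

/-- A segment from a point of an open set to a point outside it meets the frontier. -/
lemma seg_cross {Ω : Set E} (hΩ : IsOpen Ω) {a b : E} (ha : a ∈ Ω) (hb : b ∉ Ω) :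
    ∃ c ∈ segment ℝ a b, c ∈ frontier Ω := by
  by_contra h
  push_neg at h
  have hdisj : Disjoint (frontier Ω) (segment ℝ a b) := by
    rw [Set.disjoint_right]; intro c hc; exact fun hc' => h c hc hc'
  have hclopen := isClopen_preimage_val hΩ hdisj
  haveI : PreconnectedSpace (segment ℝ a b) :=
    Subtype.preconnectedSpace (convex_segment a b).isPreconnected
  have huniv := hclopen.eq_univ ⟨⟨a, left_mem_segment ℝ a b⟩, ha⟩
  have hmem : (⟨b, right_mem_segment ℝ a b⟩ : segment ℝ a b) ∈
      (Subtype.val ⁻¹' Ω : Set (segment ℝ a b)) := huniv ▸ mem_univ _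
  exact hb hmem

lemma closedBall_subset_of_lt_infDist {Ω : Set E} (hΩ : IsOpen Ω) {z : E} (hz : z ∈ Ω)
    {r : ℝ} (hr : r < infDist z (frontier Ω)) : closedBall z r ⊆ Ω := by
  intro b hb
  rcases lt_or_ge r 0 with h0 | h0
  · exact absurd (le_trans dist_nonneg (mem_closedBall.mp hb)) (not_le.mpr h0)
  by_contra hbΩ
  obtain ⟨c, hcseg, hcf⟩ := seg_cross hΩ hz hbΩ
  have hcb : c ∈ closedBall z r :=
    (convex_closedBall z r).segment_subset (mem_closedBall_self h0) hb hcseg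
  have hle : infDist z (frontier Ω) ≤ dist z c := infDist_le_dist_of_mem (x := z) hcf
  rw [dist_comm] at hle
  exact absurd (hle.trans hcb) (not_le.mpr hr)

lemma quad_id (x y : E) (l : ℝ) :
    l * ‖x‖ ^ 2 + (1 - l) * ‖y‖ ^ 2 - ‖l • x + (1 - l) • y‖ ^ 2
      = l * (1 - l) * ‖x - y‖ ^ 2 := by
  have hx : ⟪x, x⟫ = ‖x‖ ^ 2 := real_inner_self_eq_norm_sq x
  have hy : ⟪y, y⟫ = ‖y‖ ^ 2 := real_inner_self_eq_norm_sq y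
  have hm : ⟪l • x + (1 - l) • y, l • x + (1 - l) • y⟫ = ‖l • x + (1 - l) • y‖ ^ 2 :=
    real_inner_self_eq_norm_sq _
  have hs : ⟪x - y, x - y⟫ = ‖x - y‖ ^ 2 := real_inner_self_eq_norm_sq _
  simp only [inner_add_add_self, inner_sub_sub_self, real_inner_smul_left,
    real_inner_smul_right] at hm hs
  linear_combination hm + l * (1 - l) * hs - l * hx - (1 - l) * hy

lemma exists_good {s : Set E} {Q : E → Prop}
    (hae : ∀ᵐ y ∂(volume : Measure E), y ∈ s → Q y) (hs : 0 < volume s) :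
    ∃ x ∈ s, Q x := by
  by_contra h
  push_neg at h
  have hsub : s ⊆ {y | ¬ (y ∈ s → Q y)} := fun y hy => by simp [hy, h y hy]
  have h0 : volume s = 0 := measure_mono_null hsub hae
  exact absurd h0 (ne_of_gt hs)

lemma superdiff_at {u : E → ℝ} {K : Set E} {C : ℝ}
    (hC : ∀ x y : E, segment ℝ x y ⊆ K → ∀ l ∈ Set.Icc (0:ℝ) 1,
      l * u x + (1 - l) * u y - C * (l * (1 - l)) / 2 * ‖x - y‖ ^ 2
        ≤ u (l • x + (1 - l) • y))
    {x y : E} (hseg : segment ℝ x y ⊆ K) (hd : DifferentiableAt ℝ u x) :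
    u y ≤ u x + ⟪gradient u x, y - x⟫ + C / 2 * ‖y - x‖ ^ 2 := by
  have hseg' : segment ℝ y x ⊆ K := by rwa [segment_symm]
  have hgf : HasFDerivAt u (InnerProductSpace.toDual ℝ (EuclideanSpace ℝ (Fin n))
      (gradient u x)) x := hasGradientAt_iff_hasFDerivAt.mp hd.hasGradientAt
  have hcurve : HasDerivAt (fun t : ℝ => x + t • (y - x)) (y - x) 0 := by
    simpa using ((hasDerivAt_id (0:ℝ)).smul_const (y - x)).const_add x
  have hline : HasDerivAt (fun t : ℝ => u (x + t • (y - x)))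
      ⟪gradient u x, y - x⟫ 0 := by
    have h0 : x + (0:ℝ) • (y - x) = x := by simp
    have := (h0 ▸ hgf).comp_hasDerivAt 0 hcurve
    simp only [InnerProductSpace.toDual_apply_apply, zero_smul, add_zero] at this
    exact this
  rw [hasDerivAt_iff_tendsto_slope] at hline
  have hline' : Tendsto (slope (fun t : ℝ => u (x + t • (y - x))) 0) (𝓝[>] (0:ℝ))
      (𝓝 ⟪gradient u x, y - x⟫) :=
    hline.mono_left (nhdsWithin_mono _ (fun t ht => ne_of_gt ht))
  have key : ∀ l ∈ Set.Ioc (0:ℝ) 1,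
      u y - u x - C * (1 - l) / 2 * ‖y - x‖ ^ 2
        ≤ slope (fun t : ℝ => u (x + t • (y - x))) 0 l := by
    intro l hl
    have hid : l • y + (1 - l) • x = x + l • (y - x) := by
      rw [sub_smul, one_smul, smul_sub]; abel
    have hB := hC y x hseg' l ⟨hl.1.le, hl.2⟩
    rw [hid] at hB
    have h0 : (fun t : ℝ => u (x + t • (y - x))) 0 = u x := by simp
    rw [slope_def_field]
    simp only [h0, sub_zero]
    rw [le_div_iff₀ hl.1]
    nlinarith [hB]
  have h1 : Tendsto (fun l : ℝ => u y - u x - C * (1 - l) / 2 * ‖y - x‖ ^ 2)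
      (𝓝[>] (0:ℝ)) (𝓝 (u y - u x - C / 2 * ‖y - x‖ ^ 2)) := by
    have hc : Continuous (fun l : ℝ => u y - u x - C * (1 - l) / 2 * ‖y - x‖ ^ 2) := by
      fun_prop
    have := (hc.tendsto 0).mono_left (nhdsWithin_le_nhds (s := Set.Ioi (0:ℝ)))
    simpa using this
  have hfin : u y - u x - C / 2 * ‖y - x‖ ^ 2 ≤ ⟪gradient u x, y - x⟫ := by
    refine le_of_tendsto_of_tendsto h1 hline' ?_
    filter_upwards [Ioc_mem_nhdsGT_of_mem (Set.mem_Ico.mpr ⟨le_refl 0, zero_lt_one⟩)] with l hl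
    exact key l hl
  linarith

lemma ae_diff_near {Ω : Set E} (hΩopen : IsOpen Ω) (hΩbdd : Bornology.IsBounded Ω)
    {u : E → ℝ} (hu : ContinuousOn u (closure Ω))
    (hsc : ∀ K : Set (EuclideanSpace ℝ (Fin n)), K ⊆ Ω → IsCompact K →
      ∃ C : ℝ, 0 ≤ C ∧ ∀ x y : EuclideanSpace ℝ (Fin n), segment ℝ x y ⊆ K →
        ∀ l : ℝ, l ∈ Set.Icc (0:ℝ) 1 →
          l * u x + (1 - l) * u y - C * (l * (1 - l)) / 2 * ‖x - y‖ ^ 2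
            ≤ u (l • x + (1 - l) • y))
    {z : E} (hz : z ∈ Ω) :
    ∃ r > 0, ball z r ⊆ Ω ∧
      ∀ᵐ y ∂(volume : Measure E), y ∈ ball z r → DifferentiableAt ℝ u y := by
  obtain ⟨r1, hr1, hballΩ⟩ := Metric.isOpen_iff.mp hΩopen z hz
  set R := r1 / 2 with hRdef
  have hR : 0 < R := by positivity
  have hKΩ : closedBall z R ⊆ Ω := by
    refine subset_trans ?_ hballΩ
    intro y hy
    exact lt_of_le_of_lt (mem_closedBall.mp hy) (by linarith)
  obtain ⟨C, hC0, hC⟩ := hsc (closedBall z R) hKΩ (isCompact_closedBall z R)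
  set v : E → ℝ := fun y => u y - C / 2 * ‖y‖ ^ 2 with hvdef
  have hconc : ConcaveOn ℝ (ball z R) v := by
    refine ⟨convex_ball z R, ?_⟩
    intro a ha b hb la lb hla hlb hlab
    have hseg : segment ℝ a b ⊆ closedBall z R :=
      subset_trans ((convex_ball z R).segment_subset ha hb) ball_subset_closedBall
    have hlb' : lb = 1 - la := by linarith
    subst hlb'
    have hineq := hC a b hseg la ⟨hla, by linarith⟩
    have hq := quad_id a b la
    simp only [hvdef, smul_eq_mul]
    nlinarith [hineq, hq]
  have hMb : ∃ M, ∀ y ∈ closure Ω, ‖u y‖ ≤ M := by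
    rcases ((hΩbdd.isCompact_closure.image_of_continuousOn hu)).isBounded.exists_norm_le with ⟨M, hM⟩
    exact ⟨M, fun y hy => hM _ (Set.mem_image_of_mem u hy)⟩
  obtain ⟨M, hM⟩ := hMb
  have hvb : Bornology.IsBounded (v '' ball z R) := by
    rw [isBounded_iff_forall_norm_le]
    refine ⟨M + C / 2 * (‖z‖ + R) ^ 2, ?_⟩
    rintro w ⟨y, hy, rfl⟩
    have hyΩ : y ∈ closure Ω := subset_closure (hballΩ (by
      exact lt_of_lt_of_le (mem_ball.mp hy) (by linarith)))
    have hyn : ‖y‖ ≤ ‖z‖ + R := by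
      have : ‖y - z‖ < R := mem_ball_iff_norm.mp hy
      have := norm_add_le z (y - z)
      simp only [add_sub_cancel] at this
      linarith
    have h1 : ‖v y‖ ≤ ‖u y‖ + ‖C / 2 * ‖y‖ ^ 2‖ := norm_sub_le _ _
    have h2 : ‖C / 2 * ‖y‖ ^ 2‖ = C / 2 * ‖y‖ ^ 2 := by
      rw [Real.norm_eq_abs, abs_of_nonneg (by positivity)]
    have h3 : ‖y‖ ^ 2 ≤ (‖z‖ + R) ^ 2 := by nlinarith [norm_nonneg y, norm_nonneg z]
    have := hM y hyΩ
    calc ‖v y‖ ≤ ‖u y‖ + C / 2 * ‖y‖ ^ 2 := by rw [← h2]; exact h1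
    _ ≤ M + C / 2 * (‖z‖ + R) ^ 2 := by nlinarith
  obtain ⟨L, hL⟩ := hconc.exists_lipschitzOnWith_of_isBounded (half_lt_self hR) hvb
  refine ⟨R / 2, by positivity, fun y hy => hballΩ (lt_of_lt_of_le (mem_ball.mp hy) (by linarith)), ?_⟩
  filter_upwards [hL.ae_differentiableWithinAt_of_mem (μ := (volume : Measure E))] with y hy hyb
  have hdv : DifferentiableAt ℝ v y :=
    (hy hyb).differentiableAt (isOpen_ball.mem_nhds hyb)
  have hq : DifferentiableAt ℝ (fun y : E => C / 2 * ‖y‖ ^ 2) y := by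
    have : Differentiable ℝ (fun y : E => ‖y‖ ^ 2) :=
      (contDiff_norm_sq ℝ (n := 1)).differentiable one_ne_zero
    exact (this y).const_mul _
  have hueq : u = fun y => v y + C / 2 * ‖y‖ ^ 2 := by
    funext w; simp [hvdef]
  rw [hueq]
  exact hdv.add hq

lemma supergrad {Ω : Set E} (hΩopen : IsOpen Ω) (hΩbdd : Bornology.IsBounded Ω)
    {u : E → ℝ} (hu : ContinuousOn u (closure Ω))
    (hsc : ∀ K : Set (EuclideanSpace ℝ (Fin n)), K ⊆ Ω → IsCompact K →
      ∃ C : ℝ, 0 ≤ C ∧ ∀ x y : EuclideanSpace ℝ (Fin n), segment ℝ x y ⊆ K →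
        ∀ l : ℝ, l ∈ Set.Icc (0:ℝ) 1 →
          l * u x + (1 - l) * u y - C * (l * (1 - l)) / 2 * ‖x - y‖ ^ 2
            ≤ u (l • x + (1 - l) • y))
    (hgrad : ∀ᵐ x ∂(volume : Measure (EuclideanSpace ℝ (Fin n))),
      x ∈ Ω → DifferentiableAt ℝ u x → ‖gradient u x‖ = 1)
    {K : Set E} (hKΩ : K ⊆ Ω) {C : ℝ}
    (hC : ∀ x y : E, segment ℝ x y ⊆ K → ∀ l ∈ Set.Icc (0:ℝ) 1,
      l * u x + (1 - l) * u y - C * (l * (1 - l)) / 2 * ‖x - y‖ ^ 2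
        ≤ u (l • x + (1 - l) • y))
    {z : E} {ρ : ℝ} (hz : z ∈ Ω) (hρ : 0 < ρ) (hball : closedBall z ρ ⊆ K) :
    ∃ p : E, ‖p‖ = 1 ∧ ∀ y ∈ closedBall z ρ,
      u y ≤ u z + ⟪p, y - z⟫ + C / 2 * ‖y - z‖ ^ 2 := by
  obtain ⟨r, hr, hrΩ, hae⟩ := ae_diff_near hΩopen hΩbdd hu hsc hz
  have hsel : ∀ j : ℕ, ∃ x, x ∈ ball z (min r (min ρ (1 / (j + 1)))) ∧
      (DifferentiableAt ℝ u x ∧ ‖gradient u x‖ = 1) := by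
    intro j
    have hrj : (0:ℝ) < min r (min ρ (1 / (j + 1))) :=
      lt_min hr (lt_min hρ (by positivity))
    apply exists_good
    · filter_upwards [hae, hgrad] with y h1 h2 hyb
      have hyb' : y ∈ ball z r := mem_of_mem_of_subset hyb
        (ball_subset_ball (min_le_left _ _))
      have hd := h1 hyb'
      exact ⟨hd, h2 (hrΩ hyb') hd⟩
    · exact measure_ball_pos _ _ hrj
  choose xs hxsmem hxs using hsel
  have hxz : Filter.Tendsto xs atTop (𝓝 z) := by
    rw [tendsto_iff_dist_tendsto_zero]
    refine squeeze_zero (fun j => dist_nonneg) (fun j => ?_)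
      tendsto_one_div_add_atTop_nhds_zero_nat
    have := mem_ball.mp (hxsmem j)
    exact le_of_lt (lt_of_lt_of_le this ((min_le_right _ _).trans (min_le_right _ _)))
  set ps : ℕ → E := fun j => gradient u (xs j) with hpsdef
  have hpmem : ∀ j, ps j ∈ sphere (0:E) 1 := fun j =>
    mem_sphere_zero_iff_norm.mpr (hxs j).2
  obtain ⟨p, hpsp, φ, hφ, hconv⟩ := (isCompact_sphere (0:E) 1).tendsto_subseq hpmem
  refine ⟨p, mem_sphere_zero_iff_norm.mp hpsp, ?_⟩
  intro y hy
  have hineq : ∀ j, u y ≤ u (xs (φ j)) + ⟪ps (φ j), y - xs (φ j)⟫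
      + C / 2 * ‖y - xs (φ j)‖ ^ 2 := by
    intro j
    have hxmem : xs (φ j) ∈ closedBall z ρ := by
      have := mem_ball.mp (hxsmem (φ j))
      exact mem_closedBall.mpr (le_of_lt (lt_of_lt_of_le this
        ((min_le_right _ _).trans (min_le_left _ _))))
    have hseg : segment ℝ (xs (φ j)) y ⊆ K :=
      subset_trans ((convex_closedBall z ρ).segment_subset hxmem hy) hball
    exact superdiff_at hC hseg (hxs (φ j)).1
  have hxφ : Filter.Tendsto (fun j => xs (φ j)) atTop (𝓝 z) := hxz.comp hφ.tendsto_atTop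
  have hcu : Filter.Tendsto (fun j => u (xs (φ j))) atTop (𝓝 (u z)) := by
    have hcont : ContinuousAt u z :=
      hu.continuousAt (Filter.mem_of_superset (hΩopen.mem_nhds hz) subset_closure)
    exact hcont.tendsto.comp hxφ
  have hsub : Filter.Tendsto (fun j => y - xs (φ j)) atTop (𝓝 (y - z)) :=
    tendsto_const_nhds.sub hxφ
  have h2 : Filter.Tendsto (fun j => u (xs (φ j)) + ⟪ps (φ j), y - xs (φ j)⟫
      + C / 2 * ‖y - xs (φ j)‖ ^ 2) atTop
      (𝓝 (u z + ⟪p, y - z⟫ + C / 2 * ‖y - z‖ ^ 2)) := by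
    refine Filter.Tendsto.add (Filter.Tendsto.add hcu ?_) ?_
    · exact hconv.inner hsub
    · exact ((hsub.norm.pow 2).const_mul _)
  exact ge_of_tendsto' h2 hineq

lemma Kset_compact {Ω : Set E} (hΩopen : IsOpen Ω) (hΩbdd : Bornology.IsBounded Ω)
    {ε : ℝ} (hε : 0 < ε) :
    IsCompact ({y : E | ε ≤ infDist y (frontier Ω)} ∩ closure Ω) ∧
      ({y : E | ε ≤ infDist y (frontier Ω)} ∩ closure Ω) ⊆ Ω := by
  constructor
  · refine hΩbdd.isCompact_closure.of_isClosed_subset ?_ inter_subset_right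
    exact IsClosed.inter (isClosed_le continuous_const (continuous_infDist_pt _)) isClosed_closure
  · rintro y ⟨hy1, hy2⟩
    by_contra hyΩ
    have : y ∈ frontier Ω := by
      rw [hΩopen.frontier_eq]; exact ⟨hy2, hyΩ⟩
    have h0 : infDist y (frontier Ω) = 0 := infDist_zero_of_mem this
    have hy1' : ε ≤ infDist y (frontier Ω) := hy1
    rw [h0] at hy1'; linarith

lemma goodball {Ω : Set E} (hΩopen : IsOpen Ω) {z : E} {ε : ℝ} (hz : z ∈ Ω) (hε : 0 < ε)
    (hdist : ε ≤ infDist z (frontier Ω)) :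
    closedBall z (ε / 2) ⊆ {y : E | ε / 2 ≤ infDist y (frontier Ω)} ∩ closure Ω := by
  intro w hw
  have hwΩ : w ∈ Ω := closedBall_subset_of_lt_infDist hΩopen hz
    (lt_of_lt_of_le (by linarith) hdist) hw
  refine ⟨?_, subset_closure hwΩ⟩
  have h1 : infDist z (frontier Ω) ≤ infDist w (frontier Ω) + dist z w :=
    infDist_le_infDist_add_dist
  have h2 : dist z w ≤ ε / 2 := by rw [dist_comm]; exact mem_closedBall.mp hw
  simp only [Set.mem_setOf_eq]
  linarith

lemma lip_seg {Ω : Set E} (hΩopen : IsOpen Ω) (hΩbdd : Bornology.IsBounded Ω)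
    {u : E → ℝ} (hu : ContinuousOn u (closure Ω))
    (hsc : ∀ K : Set (EuclideanSpace ℝ (Fin n)), K ⊆ Ω → IsCompact K →
      ∃ C : ℝ, 0 ≤ C ∧ ∀ x y : EuclideanSpace ℝ (Fin n), segment ℝ x y ⊆ K →
        ∀ l : ℝ, l ∈ Set.Icc (0:ℝ) 1 →
          l * u x + (1 - l) * u y - C * (l * (1 - l)) / 2 * ‖x - y‖ ^ 2
            ≤ u (l • x + (1 - l) • y))
    (hgrad : ∀ᵐ x ∂(volume : Measure (EuclideanSpace ℝ (Fin n))),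
      x ∈ Ω → DifferentiableAt ℝ u x → ‖gradient u x‖ = 1)
    (hF : (frontier Ω).Nonempty)
    {a b : E} (hab : segment ℝ a b ⊆ Ω) : u b ≤ u a + ‖b - a‖ := by
  set S := segment ℝ a b with hSdef
  have hScomp : IsCompact S := by
    rw [hSdef, segment_eq_image' (𝕜 := ℝ) a b]
    exact isCompact_Icc.image (by fun_prop)
  have hSne : S.Nonempty := ⟨a, left_mem_segment ℝ a b⟩
  obtain ⟨y₀, hy₀S, hy₀min⟩ := hScomp.exists_isMinOn hSne
    ((continuous_infDist_pt (frontier Ω)).continuousOn)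
  set δ := infDist y₀ (frontier Ω) with hδdef
  have hy₀Ω : y₀ ∈ Ω := hab hy₀S
  have hδpos : 0 < δ := by
    refine (isClosed_frontier.notMem_iff_infDist_pos hF).mp ?_
    intro hmem
    rw [hΩopen.frontier_eq] at hmem
    exact hmem.2 hy₀Ω
  set K := {y : E | δ / 2 ≤ infDist y (frontier Ω)} ∩ closure Ω with hKdef
  obtain ⟨hKcomp, hKΩ⟩ := Kset_compact hΩopen hΩbdd (by positivity : (0:ℝ) < δ / 2)
  obtain ⟨C, hC0, hC⟩ := hsc K hKΩ hKcomp
  -- main estimate for a given subdivision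
  have main : ∀ N : ℕ, 1 ≤ N → ‖b - a‖ / N ≤ δ / 2 →
      u b ≤ u a + ‖b - a‖ + C * ‖b - a‖ ^ 2 / (2 * N) := by
    intro N hN1 hNδ
    have hNpos : (0:ℝ) < N := by exact_mod_cast hN1
    set w : E := (N:ℝ)⁻¹ • (b - a) with hwdef
    have hwnorm : ‖w‖ = ‖b - a‖ / N := by
      rw [hwdef, norm_smul, Real.norm_eq_abs, abs_inv, abs_of_pos hNpos]
      ring
    have hmemS : ∀ i : ℕ, i ≤ N → a + (i:ℝ) • w ∈ S := by
      intro i hi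
      rw [hSdef, segment_eq_image' (𝕜 := ℝ) a b]
      refine ⟨(i:ℝ) / N, ⟨by positivity, by
        rw [div_le_one hNpos]; exact_mod_cast hi⟩, ?_⟩
      simp only [hwdef, smul_smul, div_eq_mul_inv]
    have claim : ∀ i : ℕ, i ≤ N →
        u (a + (i:ℝ) • w) ≤ u a + i * (‖w‖ + C / 2 * ‖w‖ ^ 2) := by
      intro i hi
      induction i with
      | zero => simp
      | succ i ih =>
        have hiN : i ≤ N := le_trans (Nat.le_succ i) hi
        have hIH := ih hiN
        set z := a + (i:ℝ) • w with hzdef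
        have hzS : z ∈ S := hmemS i hiN
        have hzΩ : z ∈ Ω := hab hzS
        have hzdist : δ ≤ infDist z (frontier Ω) := hy₀min hzS
        obtain ⟨p, hp1, hpineq⟩ := supergrad hΩopen hΩbdd hu hsc hgrad hKΩ hC
          hzΩ (by positivity : (0:ℝ) < δ / 2)
          (goodball hΩopen hzΩ hδpos hzdist)
        have hstep : a + ((i:ℕ) + 1 : ℝ) • w = z + w := by
          rw [hzdef, add_smul, one_smul]; abel
        have hmemball : z + w ∈ closedBall z (δ / 2) := by
          rw [mem_closedBall, dist_self_add_left]
          rw [hwnorm]; exact hNδ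
        have happ := hpineq (z + w) hmemball
        have hinner : ⟪p, z + w - z⟫ ≤ ‖w‖ := by
          have h1 : z + w - z = w := by abel
          rw [h1]
          calc ⟪p, w⟫ ≤ ‖p‖ * ‖w‖ := real_inner_le_norm p w
          _ = ‖w‖ := by rw [hp1, one_mul]
        have hnormeq : ‖z + w - z‖ = ‖w‖ := by congr 1; abel
        rw [hnormeq] at happ
        have hfin : u (z + w) ≤ u z + ‖w‖ + C / 2 * ‖w‖ ^ 2 := by
          have := happ; linarith [hinner]
        rw [Nat.cast_succ, hstep]
        calc u (z + w) ≤ u z + ‖w‖ + C / 2 * ‖w‖ ^ 2 := hfin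
        _ ≤ u a + i * (‖w‖ + C / 2 * ‖w‖ ^ 2) + (‖w‖ + C / 2 * ‖w‖ ^ 2) := by linarith
        _ = u a + (i + 1) * (‖w‖ + C / 2 * ‖w‖ ^ 2) := by ring
    have hfinal := claim N le_rfl
    have hNb : a + (N:ℝ) • w = b := by
      rw [hwdef, smul_smul, mul_inv_cancel₀ (ne_of_gt hNpos), one_smul]
      abel
    rw [hNb] at hfinal
    calc u b ≤ u a + N * (‖w‖ + C / 2 * ‖w‖ ^ 2) := hfinal
    _ = u a + ‖b - a‖ + C * ‖b - a‖ ^ 2 / (2 * N) := by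
      rw [hwnorm]; field_simp; ring
  -- take N → ∞
  have hev : ∀ᶠ N : ℕ in atTop, u b ≤ u a + ‖b - a‖ + C * ‖b - a‖ ^ 2 / (2 * N) := by
    have h1 : ∀ᶠ N : ℕ in atTop, 1 ≤ N := Filter.eventually_ge_atTop 1
    have h2 : ∀ᶠ N : ℕ in atTop, ‖b - a‖ / N ≤ δ / 2 := by
      have : Filter.Tendsto (fun N : ℕ => ‖b - a‖ / N) atTop (𝓝 0) :=
        tendsto_const_div_atTop_nhds_zero_nat _
      exact this.eventually_le_const (by positivity)
    filter_upwards [h1, h2] with N hN1 hN2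
    exact main N hN1 hN2
  have hlim : Filter.Tendsto (fun N : ℕ => u a + ‖b - a‖ + C * ‖b - a‖ ^ 2 / (2 * N))
      atTop (𝓝 (u a + ‖b - a‖ + 0)) := by
    refine Filter.Tendsto.add tendsto_const_nhds ?_
    have : Filter.Tendsto (fun N : ℕ => (C * ‖b - a‖ ^ 2 / 2) / N) atTop (𝓝 0) :=
      tendsto_const_div_atTop_nhds_zero_nat _
    convert this using 2 with N
    ring
  rw [add_zero] at hlim
  exact ge_of_tendsto hlim hev

lemma abs_le_infDist {Ω : Set E} (hΩopen : IsOpen Ω) (hΩbdd : Bornology.IsBounded Ω)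
    {u : E → ℝ} (hu : ContinuousOn u (closure Ω))
    (hu0 : ∀ x ∈ frontier Ω, u x = 0)
    (hsc : ∀ K : Set (EuclideanSpace ℝ (Fin n)), K ⊆ Ω → IsCompact K →
      ∃ C : ℝ, 0 ≤ C ∧ ∀ x y : EuclideanSpace ℝ (Fin n), segment ℝ x y ⊆ K →
        ∀ l : ℝ, l ∈ Set.Icc (0:ℝ) 1 →
          l * u x + (1 - l) * u y - C * (l * (1 - l)) / 2 * ‖x - y‖ ^ 2
            ≤ u (l • x + (1 - l) • y))
    (hgrad : ∀ᵐ x ∂(volume : Measure (EuclideanSpace ℝ (Fin n))),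
      x ∈ Ω → DifferentiableAt ℝ u x → ‖gradient u x‖ = 1)
    (hF : (frontier Ω).Nonempty)
    {y : E} (hy : y ∈ Ω) : |u y| ≤ infDist y (frontier Ω) := by
  have hFcomp : IsCompact (frontier Ω) :=
    isCompact_of_isClosed_isBounded isClosed_frontier
      (hΩbdd.closure.subset frontier_subset_closure)
  obtain ⟨z, hzF, hzd⟩ := hFcomp.exists_infDist_eq_dist hF y
  have hyz : 0 < dist y z := by
    rw [dist_pos]
    intro h
    rw [h] at hy
    rw [hΩopen.frontier_eq] at hzF
    exact hzF.2 hy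
  have hγmem : ∀ t : ℝ, t ∈ Set.Ico (0:ℝ) 1 → segment ℝ y (y + t • (z - y)) ⊆ Ω := by
    intro t ht
    have hdist : dist y (y + t • (z - y)) = t * dist y z := by
      rw [dist_self_add_right, norm_smul, Real.norm_eq_abs, abs_of_nonneg ht.1,
        dist_eq_norm, norm_sub_rev]
    have hsub : segment ℝ y (y + t • (z - y)) ⊆ closedBall y (t * dist y z) := by
      refine (convex_closedBall y (t * dist y z)).segment_subset
        (mem_closedBall_self (mul_nonneg ht.1 dist_nonneg)) ?_
      rw [mem_closedBall, dist_comm, hdist]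
    refine subset_trans hsub (closedBall_subset_of_lt_infDist hΩopen hy ?_)
    rw [hzd]
    nlinarith [ht.1, ht.2, hyz]
  have hest : ∀ t : ℝ, t ∈ Set.Ico (0:ℝ) 1 →
      |u y| ≤ t * dist y z + |u (y + t • (z - y))| := by
    intro t ht
    have hseg := hγmem t ht
    have hseg' : segment ℝ (y + t • (z - y)) y ⊆ Ω := by rwa [segment_symm]
    have h1 := lip_seg hΩopen hΩbdd hu hsc hgrad hF hseg
    have h2 := lip_seg hΩopen hΩbdd hu hsc hgrad hF hseg'
    have hnorm : ‖y + t • (z - y) - y‖ = t * dist y z := by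
      rw [add_sub_cancel_left, norm_smul, Real.norm_eq_abs, abs_of_nonneg ht.1,
        dist_eq_norm, norm_sub_rev]
    rw [hnorm] at h1
    have hnorm' : ‖y - (y + t • (z - y))‖ = t * dist y z := by
      rw [norm_sub_rev, add_sub_cancel_left, norm_smul, Real.norm_eq_abs,
        abs_of_nonneg ht.1, dist_eq_norm, norm_sub_rev]
    rw [hnorm'] at h2
    rw [abs_le]
    constructor
    · have := neg_abs_le (u (y + t • (z - y)))
      linarith
    · have := le_abs_self (u (y + t • (z - y)))
      linarith
  set tk : ℕ → ℝ := fun k => 1 - 1 / (k + 1) with htkdef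
  have htkmem : ∀ k : ℕ, tk k ∈ Set.Ico (0:ℝ) 1 := by
    intro k
    constructor
    · simp only [htkdef, sub_nonneg]
      rw [div_le_one (by positivity)]
      have : (1:ℝ) ≤ k + 1 := by
        have := Nat.cast_nonneg (α := ℝ) k; linarith
      linarith
    · simp only [htkdef, sub_lt_self_iff]
      positivity
  have htk : Filter.Tendsto tk atTop (𝓝 1) := by
    have h0 : Filter.Tendsto (fun k : ℕ => 1 / ((k : ℝ) + 1)) atTop (𝓝 0) :=
      tendsto_one_div_add_atTop_nhds_zero_nat
    have h1 := (tendsto_const_nhds : Filter.Tendsto (fun _ : ℕ => (1:ℝ)) atTop (𝓝 1)).sub h0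
    show Filter.Tendsto (fun k : ℕ => 1 - 1 / ((k : ℝ) + 1)) atTop (𝓝 1)
    simpa using h1
  have hγ : Filter.Tendsto (fun k => y + tk k • (z - y)) atTop (𝓝 z) := by
    have := (htk.smul_const (z - y)).const_add y
    have h1 : y + (1:ℝ) • (z - y) = z := by rw [one_smul]; abel
    rwa [h1] at this
  have huz : Filter.Tendsto (fun k => u (y + tk k • (z - y))) atTop (𝓝 0) := by
    have hcw : ContinuousWithinAt u (closure Ω) z := hu z (frontier_subset_closure hzF)
    have hz0 : u z = 0 := hu0 z hzF
    have hγ' : Filter.Tendsto (fun k => y + tk k • (z - y)) atTop (𝓝[closure Ω] z) := by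
      rw [tendsto_nhdsWithin_iff]
      refine ⟨hγ, Filter.Eventually.of_forall fun k => ?_⟩
      exact subset_closure (hγmem (tk k) (htkmem k)
        (right_mem_segment ℝ y (y + tk k • (z - y))))
    have := hcw.tendsto.comp hγ'
    rwa [hz0] at this
  have hlim : Filter.Tendsto (fun k => tk k * dist y z + |u (y + tk k • (z - y))|)
      atTop (𝓝 (1 * dist y z + |(0:ℝ)|)) :=
    (htk.mul_const _).add (huz.abs)
  rw [abs_zero, add_zero, one_mul] at hlim
  have hres := ge_of_tendsto' hlim (fun k => hest (tk k) (htkmem k))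
  rwa [← hzd] at hres

/-- A function `u` is locally semiconcave on an open set `A` if for every compact `K ⊆ A`
there is a constant `C ≥ 0` such that the semiconcavity inequality holds on every
segment contained in `K`. -/
def LocallySemiconcaveOn {n : ℕ} (A : Set (EuclideanSpace ℝ (Fin n)))
    (u : EuclideanSpace ℝ (Fin n) → ℝ) : Prop :=
  ∀ K : Set (EuclideanSpace ℝ (Fin n)), K ⊆ A → IsCompact K →
    ∃ C : ℝ, 0 ≤ C ∧ ∀ x y : EuclideanSpace ℝ (Fin n), segment ℝ x y ⊆ K →
      ∀ l : ℝ, l ∈ Set.Icc (0:ℝ) 1 →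
        l * u x + (1 - l) * u y - C * (l * (1 - l)) / 2 * ‖x - y‖ ^ 2
          ≤ u (l • x + (1 - l) • y)

set_option maxHeartbeats 1000000 in
theorem eikonal_solution_rigidity
    {n : ℕ} (Ω : Set (EuclideanSpace ℝ (Fin n)))
    (hΩopen : IsOpen Ω) (hΩbdd : Bornology.IsBounded Ω)
    (u : EuclideanSpace ℝ (Fin n) → ℝ)
    (hu : ContinuousOn u (closure Ω))
    (hu0 : ∀ x ∈ frontier Ω, u x = 0)
    (hsc : LocallySemiconcaveOn Ω u)
    (hgrad : ∀ᵐ x ∂(volume : Measure (EuclideanSpace ℝ (Fin n))),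
      x ∈ Ω → DifferentiableAt ℝ u x → ‖gradient u x‖ = 1) :
    ∀ x ∈ Ω, u x = Metric.infDist x (frontier Ω) := by
  have hsc' : ∀ K : Set (EuclideanSpace ℝ (Fin n)), K ⊆ Ω → IsCompact K →
      ∃ C : ℝ, 0 ≤ C ∧ ∀ x y : EuclideanSpace ℝ (Fin n), segment ℝ x y ⊆ K →
        ∀ l : ℝ, l ∈ Set.Icc (0:ℝ) 1 →
          l * u x + (1 - l) * u y - C * (l * (1 - l)) / 2 * ‖x - y‖ ^ 2
            ≤ u (l • x + (1 - l) • y) := hsc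
  intro x₀ hx₀
  -- bound for u on the closure
  have hBex : ∃ B : ℝ, ∀ y ∈ closure Ω, |u y| ≤ B := by
    rcases (hΩbdd.isCompact_closure.image_of_continuousOn hu).isBounded.exists_norm_le with
      ⟨B, hB⟩
    exact ⟨B, fun y hy => hB _ (Set.mem_image_of_mem u hy)⟩
  obtain ⟨B, hB⟩ := hBex
  have hB0 : |u x₀| ≤ B := hB x₀ (subset_closure hx₀)
  rcases Set.eq_empty_or_nonempty (frontier Ω) with hFe | hF
  · -- frontier empty: impossible since Ω is bounded, open, nonempty
    exfalso
    have hΩuniv : Ω = univ := by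
      rcases frontier_eq_empty_iff.mp hFe with h | h
      · exact absurd (h ▸ hx₀) (Set.notMem_empty x₀)
      · exact h
    obtain ⟨C, hC0, hC⟩ := hsc' (closedBall x₀ 1) (by rw [hΩuniv]; exact subset_univ _)
      (isCompact_closedBall _ _)
    obtain ⟨p, hp1, -⟩ := supergrad hΩopen hΩbdd hu hsc' hgrad
      (by rw [hΩuniv]; exact subset_univ _) hC (z := x₀) (ρ := 1)
      (by rw [hΩuniv]; trivial) one_pos subset_rfl
    obtain ⟨R, hR⟩ := hΩbdd.subset_closedBall (0 : EuclideanSpace ℝ (Fin n))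
    have hmem : (|R| + 1) • p ∈ Ω := by rw [hΩuniv]; trivial
    have := hR hmem
    rw [mem_closedBall, dist_zero_right, norm_smul, Real.norm_eq_abs, hp1, mul_one,
      abs_of_nonneg (by positivity : (0:ℝ) ≤ |R| + 1)] at this
    have : R ≤ |R| := le_abs_self R
    linarith [le_abs_self R, hR hmem, abs_nonneg R]
  · set F := frontier Ω with hFdef
    set d := infDist x₀ F with hddef
    have hd1 : u x₀ ≤ d := le_trans (le_abs_self _)
      (abs_le_infDist hΩopen hΩbdd hu hu0 hsc' hgrad hF hx₀)
    have hd2 : d ≤ u x₀ := by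
      refine le_of_forall_pos_le_add ?_
      intro ε hε
      set ε' := ε / 3 with hε'def
      have hε' : 0 < ε' := by positivity
      by_cases hcase : d < ε'
      · have h1 : -d ≤ u x₀ := by
          have := abs_le_infDist hΩopen hΩbdd hu hu0 hsc' hgrad hF hx₀
          rw [abs_le] at this
          exact this.1
        have hd0 : 0 ≤ d := infDist_nonneg
        linarith
      push_neg at hcase
      obtain ⟨hKcomp, hKΩ⟩ := Kset_compact hΩopen hΩbdd (by positivity : (0:ℝ) < ε' / 2)
      set K := {y : EuclideanSpace ℝ (Fin n) | ε' / 2 ≤ infDist y F} ∩ closure Ω with hKdef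
      obtain ⟨C, hC0, hC⟩ := hsc' K hKΩ hKcomp
      set h := min (ε' / 4) (min (1 / (C + 1)) (ε' / ((C + 1) * (2 * (|u x₀| + B) + 1))))
        with hhdef
      have hBpos : 0 ≤ |u x₀| + B := by linarith [abs_nonneg (u x₀)]
      have hh0 : 0 < h := by
        refine lt_min (by positivity) (lt_min (one_div_pos.mpr (by linarith)) ?_)
        have hden : (0:ℝ) < (C + 1) * (2 * (|u x₀| + B) + 1) := mul_pos (by linarith) (by linarith)
        exact div_pos hε' hden
      have hh1 : h ≤ ε' / 4 := min_le_left _ _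
      have hh2 : C * h ≤ 1 := by
        have h2 : h ≤ 1 / (C + 1) := le_trans (min_le_right _ _) (min_le_left _ _)
        have h3 : C * h ≤ C * (1 / (C + 1)) := by
          apply mul_le_mul_of_nonneg_left h2 hC0
        have h4 : C * (1 / (C + 1)) ≤ 1 := by
          rw [mul_one_div, div_le_one (by positivity)]; linarith
        linarith
      have hh3 : C * h * (2 * (|u x₀| + B) + 1) ≤ ε' := by
        have h2 : h ≤ ε' / ((C + 1) * (2 * (|u x₀| + B) + 1)) :=
          le_trans (min_le_right _ _) (min_le_right _ _)
        have hpos : (0:ℝ) < (C + 1) * (2 * (|u x₀| + B) + 1) := mul_pos (by linarith) (by linarith)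
        have h3 : C * h * (2 * (|u x₀| + B) + 1)
            ≤ C * (ε' / ((C + 1) * (2 * (|u x₀| + B) + 1))) * (2 * (|u x₀| + B) + 1) := by
          apply mul_le_mul_of_nonneg_right (mul_le_mul_of_nonneg_left h2 hC0) (by positivity)
        have h4 : C * (ε' / ((C + 1) * (2 * (|u x₀| + B) + 1))) * (2 * (|u x₀| + B) + 1)
            = ε' * (C / (C + 1)) := by field_simp
        have h5 : C / (C + 1) ≤ 1 := by rw [div_le_one (by positivity)]; linarith
        have h6 : ε' * (C / (C + 1)) ≤ ε' := by nlinarith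
        linarith
      have hChalf : 1 - C * h / 2 ≥ 1 / 2 := by linarith
      -- the iteration
      have iter : ∀ k : ℕ, (∃ y, y ∈ Ω ∧ dist y x₀ ≤ k * h ∧
          u y ≤ u x₀ - (k * h) * (1 - C * h / 2)) ∨ d ≤ u x₀ + 3 * ε' := by
        intro k
        induction k with
        | zero => exact Or.inl ⟨x₀, hx₀, by simp, by simp⟩
        | succ k ih =>
          rcases ih with ⟨y, hyΩ, hyd, hyu⟩ | hdone
          · by_cases hnear : infDist y F < ε'
            · right
              have hy1 : -infDist y F ≤ u y := by
                have := abs_le_infDist hΩopen hΩbdd hu hu0 hsc' hgrad hF hyΩ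
                rw [abs_le] at this; exact this.1
              have hy2 : -B ≤ u y := by
                have := hB y (subset_closure hyΩ); rw [abs_le] at this; exact this.1
              have hkh0 : 0 ≤ (k:ℝ) * h := mul_nonneg (Nat.cast_nonneg k) hh0.le
              have hprod : ((k:ℝ) * h) * (1 / 2) ≤ ((k:ℝ) * h) * (1 - C * h / 2) :=
                mul_le_mul_of_nonneg_left hChalf hkh0
              have hT1 : ((k:ℝ) * h) * (1 - C * h / 2) ≤ u x₀ + ε' := by linarith
              have hT2 : (k:ℝ) * h ≤ 2 * (|u x₀| + B) := by
                have hXB : ((k:ℝ) * h) * (1 - C * h / 2) ≤ u x₀ + B := by linarith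
                have := le_abs_self (u x₀)
                linarith
              have hT3 : ((k:ℝ) * h) * (C * h / 2) ≤ ε' / 2 := by
                have hmul : ((k:ℝ) * h) * (C * h / 2) ≤ (2 * (|u x₀| + B)) * (C * h / 2) :=
                  mul_le_mul_of_nonneg_right hT2 (by nlinarith [mul_nonneg hC0 hh0.le])
                nlinarith [hh3]
              have hT4 : (k:ℝ) * h ≤ u x₀ + ε' + ε' / 2 := by nlinarith [hT1, hT3]
              have hd5 : d ≤ infDist y F + dist x₀ y := infDist_le_infDist_add_dist
              rw [dist_comm] at hd5
              linarith
            · left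
              push_neg at hnear
              obtain ⟨p, hp1, hpineq⟩ := supergrad hΩopen hΩbdd hu hsc' hgrad hKΩ hC
                hyΩ (by positivity : (0:ℝ) < ε' / 2) (goodball hΩopen hyΩ hε' hnear)
              set y' := y + (-h) • p with hy'def
              have hmem : y' ∈ closedBall y (ε' / 2) := by
                rw [hy'def, mem_closedBall, dist_self_add_left, norm_smul,
                  Real.norm_eq_abs, abs_neg, abs_of_pos hh0, hp1, mul_one]
                linarith
              have hy'Ω : y' ∈ Ω := hKΩ (goodball hΩopen hyΩ hε' hnear hmem)
              have happ := hpineq y' hmem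
              have hsub : y' - y = (-h) • p := by rw [hy'def]; abel
              have hinner : ⟪p, y' - y⟫ = -h := by
                rw [hsub, real_inner_smul_right, real_inner_self_eq_norm_sq, hp1]
                ring
              have hnorm : ‖y' - y‖ = h := by
                rw [hsub, norm_smul, Real.norm_eq_abs, abs_neg, abs_of_pos hh0, hp1, mul_one]
              rw [hinner, hnorm] at happ
              refine ⟨y', hy'Ω, ?_, ?_⟩
              · have hd1' : dist y' x₀ ≤ dist y' y + dist y x₀ := dist_triangle _ _ _
                have hd2' : dist y' y = h := by
                  rw [hy'def, dist_self_add_left, norm_smul, Real.norm_eq_abs, abs_neg,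
                    abs_of_pos hh0, hp1, mul_one]
                push_cast
                rw [hd2'] at hd1'
                linarith
              · push_cast
                have hstep : u y' ≤ u y - h * (1 - C * h / 2) := by nlinarith [happ]
                nlinarith [hyu, hstep]
          · exact Or.inr hdone
      -- termination
      have hdone : d ≤ u x₀ + 3 * ε' := by
        by_contra hcon
        have hall : ∀ k : ℕ, ∃ y, y ∈ Ω ∧ dist y x₀ ≤ k * h ∧
            u y ≤ u x₀ - (k * h) * (1 - C * h / 2) := by
          intro k
          rcases iter k with hgood | hbad
          · exact hgood
          · exact absurd hbad hcon
        obtain ⟨k, hk⟩ := exists_nat_gt (2 * (|u x₀| + B) / h)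
        obtain ⟨y, hyΩ, hyd, hyu⟩ := hall k
        have hy2 : -B ≤ u y := by
          have := hB y (subset_closure hyΩ); rw [abs_le] at this; exact this.1
        have hkh0 : 0 ≤ (k:ℝ) * h := mul_nonneg (Nat.cast_nonneg k) hh0.le
        have hprod : ((k:ℝ) * h) * (1 / 2) ≤ ((k:ℝ) * h) * (1 - C * h / 2) :=
          mul_le_mul_of_nonneg_left hChalf hkh0
        have h1 : ((k:ℝ) * h) * (1 - C * h / 2) ≤ u x₀ + B := by linarith
        have h2 : (k:ℝ) * h ≤ 2 * (|u x₀| + B) := by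
          have := le_abs_self (u x₀)
          linarith
        have h3 : (k:ℝ) > 2 * (|u x₀| + B) / h := hk
        have h4 : (k:ℝ) * h > 2 * (|u x₀| + B) := by
          rw [gt_iff_lt, div_lt_iff₀ hh0] at h3
          linarith
        linarith
      have : 3 * ε' = ε := by rw [hε'def]; ring
      linarith
    linarith
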